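/- Let $Y : [a,b] \to \mathbb{C}^{m\times m}$ be a $C^1$ invertible-matrix-valued solution such that $H(t) := \dot{Y}(t) Y(t)^{-1}$ is symmetric with $\dot{H} + H^2 + D = 0$ for a real symmetric continuous $D(t)$. Then the quantity $\det(\Im H(t)) \cdot |\det Y(t)|^2$ is constant in $t$. -/

import Mathlib

attribute [local instance] Matrix.normedAddCommGroup Matrix.normedSpace

open Set
open scoped Matrix


noncomputable def mulCLM (n : ℕ) :
    Matrix (Fin n) (Fin n) ℂ →L[ℝ] Matrix (Fin n) (Fin n) ℂ →L[ℝ] Matrix (Fin n) (Fin n) ℂ :=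
  LinearMap.toContinuousLinearMap
    { toFun := fun A => LinearMap.toContinuousLinearMap
        { toFun := fun B => A * B
          map_add' := fun B C => by simp [mul_add]
          map_smul' := fun r B => by simp [Matrix.mul_smul] }
      map_add' := fun A B => by ext C i j; simp [Matrix.add_mul]
      map_smul' := fun r A => by ext C i j; simp [Matrix.smul_mul] }

@[simp] lemma mulCLM_apply {n : ℕ} (A B : Matrix (Fin n) (Fin n) ℂ) : mulCLM n A B = A * B := rfl

noncomputable def ctCLM (n : ℕ) :
    Matrix (Fin n) (Fin n) ℂ →L[ℝ] Matrix (Fin n) (Fin n) ℂ :=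
  LinearMap.toContinuousLinearMap
    { toFun := fun A => Aᴴ
      map_add' := fun A B => Matrix.conjTranspose_add A B
      map_smul' := fun r A => by
        ext i j; simp [Matrix.conjTranspose_apply] }

@[simp] lemma ctCLM_apply {n : ℕ} (A : Matrix (Fin n) (Fin n) ℂ) : ctCLM n A = Aᴴ := rfl

lemma HasDerivWithinAt.matMul {n : ℕ} {f g : ℝ → Matrix (Fin n) (Fin n) ℂ}
    {f' g' : Matrix (Fin n) (Fin n) ℂ} {s : Set ℝ} {x : ℝ}
    (hf : HasDerivWithinAt f f' s x) (hg : HasDerivWithinAt g g' s x) :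
    HasDerivWithinAt (fun t => f t * g t) (f' * g x + f x * g') s x := by
  have hb : IsBoundedBilinearMap ℝ
      (fun p : Matrix (Fin n) (Fin n) ℂ × Matrix (Fin n) (Fin n) ℂ => p.1 * p.2) :=
    (mulCLM n).isBoundedBilinearMap
  have hc := (hb.hasFDerivAt (f x, g x)).comp_hasDerivWithinAt x (hf.prodMk hg)
  rw [show f' * g x + f x * g' = hb.deriv (f x, g x) (f', g') by simp [add_comm]]
  exact hc

lemma HasDerivWithinAt.matCT {n : ℕ} {f : ℝ → Matrix (Fin n) (Fin n) ℂ}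
    {f' : Matrix (Fin n) (Fin n) ℂ} {s : Set ℝ} {x : ℝ}
    (hf : HasDerivWithinAt f f' s x) :
    HasDerivWithinAt (fun t => (f t)ᴴ) f'ᴴ s x := by
  have hc : HasDerivWithinAt (fun t => ctCLM n (f t)) (ctCLM n f') s x :=
    HasFDerivAt.comp_hasDerivWithinAt (x := x) (l := fun A => ctCLM n A) (ctCLM n).hasFDerivAt hf
  simpa using hc

/-- For an invertible solution `Y` of the Jacobi equation whose logarithmic derivative
`H = Y' Y⁻¹` is symmetric and solves the Riccati equation with real symmetric `D`,
the quantity `det(Im H) * |det Y|²` is constant. -/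
theorem stmt_10 (m : ℕ) (a b : ℝ)
    (D : ℝ → Matrix (Fin m) (Fin m) ℝ) (hD : ContinuousOn D (Icc a b))
    (hDsymm : ∀ t ∈ Icc a b, (D t).transpose = D t)
    (Y Y' H' : ℝ → Matrix (Fin m) (Fin m) ℂ)
    (hY : ∀ t ∈ Icc a b, HasDerivWithinAt Y (Y' t) (Icc a b) t)
    (hinv : ∀ t ∈ Icc a b, IsUnit (Y t))
    (hHsymm : ∀ t ∈ Icc a b, (Y' t * (Y t)⁻¹).transpose = Y' t * (Y t)⁻¹)
    (hH : ∀ t ∈ Icc a b,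
      HasDerivWithinAt (fun s => Y' s * (Y s)⁻¹) (H' t) (Icc a b) t)
    (hRic : ∀ t ∈ Icc a b,
      H' t + (Y' t * (Y t)⁻¹) * (Y' t * (Y t)⁻¹) + (D t).map Complex.ofReal = 0) :
    ∀ s ∈ Icc a b, ∀ t ∈ Icc a b,
      ((Y' s * (Y s)⁻¹).map Complex.im).det * ‖(Y s).det‖ ^ 2 =
      ((Y' t * (Y t)⁻¹).map Complex.im).det * ‖(Y t).det‖ ^ 2 := by
  set Dc : ℝ → Matrix (Fin m) (Fin m) ℂ := fun t => (D t).map Complex.ofReal with hDc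
  set Hf : ℝ → Matrix (Fin m) (Fin m) ℂ := fun t => Y' t * (Y t)⁻¹ with hHfdef
  have Key1 : ∀ u ∈ Icc a b, Hf u * Y u = Y' u := fun u hu =>
    Matrix.nonsing_inv_mul_cancel_right _ _ ((Matrix.isUnit_iff_isUnit_det _).mp (hinv u hu))
  -- second derivative of Y
  have hY'' : ∀ u ∈ Icc a b, HasDerivWithinAt Y' (-(Dc u * Y u)) (Icc a b) u := by
    intro u hu
    have h1 : HasDerivWithinAt (fun s => Hf s * Y s) (H' u * Y u + Hf u * Y' u) (Icc a b) u :=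
      (hH u hu).matMul (hY u hu)
    have h2 : HasDerivWithinAt Y' (H' u * Y u + Hf u * Y' u) (Icc a b) u :=
      h1.congr (fun v hv => (Key1 v hv).symm) (Key1 u hu).symm
    have hH' : H' u = -(Hf u * Hf u) - Dc u := by
      have hr := hRic u hu
      have : H' u + Hf u * Hf u = -Dc u := eq_neg_of_add_eq_zero_left hr
      have := eq_sub_of_add_eq this
      rw [this]; abel
    have hval : H' u * Y u + Hf u * Y' u = -(Dc u * Y u) := by
      rw [hH', ← Key1 u hu]
      noncomm_ring
    exact hval ▸ h2
  -- the Wronskian-type matrix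
  set W : ℝ → Matrix (Fin m) (Fin m) ℂ := fun u => (Y u)ᴴ * Y' u - (Y' u)ᴴ * Y u with hWdef
  have hDch : ∀ u ∈ Icc a b, (Dc u)ᴴ = Dc u := by
    intro u hu
    ext i j
    have h : D u j i = D u i j := by
      conv_rhs => rw [← hDsymm u hu]
      rfl
    simp [Matrix.conjTranspose_apply, hDc, Matrix.map_apply, h]
  have hW0 : ∀ u ∈ Icc a b, HasDerivWithinAt W 0 (Icc a b) u := by
    intro u hu
    have h1 := (((hY u hu).matCT).matMul (hY'' u hu)).sub (((hY'' u hu).matCT).matMul (hY u hu))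
    refine h1.congr_deriv ?_
    rw [Matrix.conjTranspose_neg, Matrix.conjTranspose_mul, hDch u hu]
    noncomm_ring
  -- W is constant
  have hWc : ∀ u ∈ Icc a b, W u = W a := by
    apply constant_of_has_deriv_right_zero
    · intro u hu; exact (hW0 u hu).continuousWithinAt
    · intro x hx
      exact (hW0 x ⟨hx.1, hx.2.le⟩).mono_of_mem_nhdsWithin (Icc_mem_nhdsGE_of_mem hx)
  -- determinant identity
  have hdet : ∀ u ∈ Icc a b, (W u).det =
      (2 * Complex.I) ^ m *
        Complex.ofReal (((Hf u).map Complex.im).det * ‖(Y u).det‖ ^ 2) := by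
    intro u hu
    have hsymm' : (Hf u)ᵀ = Hf u := hHsymm u hu
    have hmid : Hf u - (Hf u)ᴴ =
        (2 * Complex.I) • ((Hf u).map Complex.im).map Complex.ofReal := by
      ext i j
      have hs : Hf u j i = Hf u i j := by
        conv_rhs => rw [← hsymm']
        rfl
      simp only [Matrix.sub_apply, Matrix.conjTranspose_apply, Matrix.smul_apply,
        Matrix.map_apply, smul_eq_mul]
      rw [hs, Complex.star_def, Complex.sub_conj]
      push_cast; ring
    have hWu : W u = (Y u)ᴴ *
        ((2 * Complex.I) • ((Hf u).map Complex.im).map Complex.ofReal) * Y u := by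
      rw [← hmid, hWdef]
      simp only
      rw [← Key1 u hu, Matrix.conjTranspose_mul]
      noncomm_ring
    have hmap : (((Hf u).map Complex.im).map Complex.ofReal).det =
        (↑(((Hf u).map Complex.im).det) : ℂ) :=
      (RingHom.map_det Complex.ofRealHom _).symm
    have habs : star (Y u).det * (Y u).det = ((‖(Y u).det‖ ^ 2 : ℝ) : ℂ) := by
      rw [Complex.star_def, mul_comm, Complex.mul_conj, ← Complex.sq_norm]
    rw [hWu, Matrix.det_mul, Matrix.det_mul, Matrix.det_smul, Matrix.det_conjTranspose,
      Fintype.card_fin, hmap]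
    have hre : star (Y u).det * ((2 * Complex.I) ^ m * (↑(((Hf u).map Complex.im).det) : ℂ)) *
          (Y u).det
        = (2 * Complex.I) ^ m *
          ((↑(((Hf u).map Complex.im).det) : ℂ) * (star (Y u).det * (Y u).det)) := by ring
    rw [hre, habs]
    push_cast
    ring
  -- conclude
  intro s hs t ht
  have h1 := hdet s hs
  have h2 := hdet t ht
  rw [hWc s hs] at h1
  rw [hWc t ht] at h2
  have h3 := h1.symm.trans h2
  have h2I : (2 * Complex.I) ^ m ≠ 0 :=
    pow_ne_zero _ (mul_ne_zero two_ne_zero Complex.I_ne_zero)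
  have h4 := mul_left_cancel₀ h2I h3
  exact_mod_cast h4
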